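/- Let n ≥ 3 and N ≥ 3. Call a finite set Δ of permutations of Fin n an instruction set if |Δ| = n − 1, every σ ∈ Δ satisfies σ⁻¹ 0 ≠ 0, and the map σ ↦ σ⁻¹ 0 is injective on Δ (so for every k ≠ 0 there is exactly one σ ∈ Δ with σ k = 0). Let Δgen be an instruction set generator: a function assigning to each index i with 1 ≤ i < N and each list of i permutations of Fin n an instruction set. Let B be the set of sequences σ : Fin N → Equiv.Perm (Fin n) such that σ 0 = 1 (the identity), σ 1 is the unique element of Δgen 1 [σ 0] sending 1 to 0, and for each 2 ≤ i < N, σ i ∈ Δgen i [σ 0, …, σ (i−1)]. Let A be the set of sequences u : Fin N → Fin n with u 0 = 0, u 1 = 1, and u j ≠ u (j+1) for all j with j + 1 < N. Then the map φ : B → A defined by φ(σ) = u where u j = ((σ j) ∘ (σ (j−1)) ∘ ⋯ ∘ (σ 1))⁻¹ 0 (and u 0 = 0) is a well-defined bijection from B onto A. -/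

import Mathlib

namespace Stmt9Aux

noncomputable def pickPerm {n : ℕ} (Δ : Finset (Equiv.Perm (Fin n))) (x z : Fin n) :
    Equiv.Perm (Fin n) :=
  if h : ∃ σ, σ ∈ Δ ∧ σ⁻¹ z = x then h.choose else 1

theorem pickPerm_spec {n : ℕ} {Δ : Finset (Equiv.Perm (Fin n))} {x z : Fin n}
    (h : ∃ σ, σ ∈ Δ ∧ σ⁻¹ z = x) :
    pickPerm Δ x z ∈ Δ ∧ (pickPerm Δ x z)⁻¹ z = x := by
  rw [pickPerm, dif_pos h]
  exact h.choose_spec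

theorem exists_inv_eq {n : ℕ} {Δ : Finset (Equiv.Perm (Fin n))} {z0 : Fin n}
    (hcard : Δ.card = n - 1)
    (hne : ∀ σ ∈ Δ, σ⁻¹ z0 ≠ z0)
    (hinj : Set.InjOn (fun σ : Equiv.Perm (Fin n) => σ⁻¹ z0) ↑Δ)
    {x : Fin n} (hx : x ≠ z0) : ∃ σ, σ ∈ Δ ∧ σ⁻¹ z0 = x := by
  classical
  have hn0 : 0 < n := Fin.pos z0
  have himg : (Δ.image fun σ : Equiv.Perm (Fin n) => σ⁻¹ z0) = Finset.univ.erase z0 := by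
    apply Finset.eq_of_subset_of_card_le
    · intro y hy
      simp only [Finset.mem_image] at hy
      obtain ⟨σ, hσ, rfl⟩ := hy
      exact Finset.mem_erase.2 ⟨hne σ hσ, Finset.mem_univ _⟩
    · rw [Finset.card_erase_of_mem (Finset.mem_univ _), Finset.card_univ, Fintype.card_fin,
        Finset.card_image_of_injOn hinj, hcard]
  have hxm : x ∈ Δ.image fun σ : Equiv.Perm (Fin n) => σ⁻¹ z0 := by
    rw [himg]; exact Finset.mem_erase.2 ⟨hx, Finset.mem_univ _⟩
  simp only [Finset.mem_image] at hxm
  obtain ⟨σ, hσ, hval⟩ := hxm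
  exact ⟨σ, hσ, hval⟩

def Pk {n : ℕ} (σ' : ℕ → Equiv.Perm (Fin n)) : ℕ → Equiv.Perm (Fin n)
  | 0 => 1
  | (j+1) => σ' (j+1) * Pk σ' j

theorem Pk_zero {n : ℕ} (σ' : ℕ → Equiv.Perm (Fin n)) : Pk σ' 0 = 1 := rfl

theorem Pk_succ {n : ℕ} (σ' : ℕ → Equiv.Perm (Fin n)) (j : ℕ) :
    Pk σ' (j+1) = σ' (j+1) * Pk σ' j := rfl

theorem Pk_eq_prod {n : ℕ} (σ' : ℕ → Equiv.Perm (Fin n)) (j : ℕ) :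
    (List.ofFn fun a : Fin j => σ' (j - a.val)).prod = Pk σ' j := by
  induction j with
  | zero => simp [Pk]
  | succ j ih =>
    rw [List.ofFn_succ, List.prod_cons, Pk]
    have : (List.ofFn fun i : Fin j => σ' (j + 1 - (i.succ).val)) =
        List.ofFn fun a : Fin j => σ' (j - a.val) := by
      apply congrArg List.ofFn
      funext a
      simp [Fin.val_succ, Nat.succ_sub_succ]
    rw [this, ih]
    norm_num

theorem Pk_congr {n : ℕ} {σ' τ' : ℕ → Equiv.Perm (Fin n)} (j : ℕ)
    (h : ∀ i, 1 ≤ i → i ≤ j → σ' i = τ' i) : Pk σ' j = Pk τ' j := by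
  induction j with
  | zero => rfl
  | succ j ih =>
    rw [Pk, Pk, h (j+1) (by omega) le_rfl, ih fun i h1 h2 => h i h1 (by omega)]

end Stmt9Aux

open Stmt9Aux in
/-- Theorem (corr): for any instruction set generator, the map φ (tracking the preimage of 0
under the composite of the instructions applied so far) is a bijection from the set B of
instruction sequences onto the set A of columns of orderings. -/
theorem stmt_9 (n N : ℕ) (hn : 3 ≤ n) (hN : 3 ≤ N)
    (IsInstructionSet : Finset (Equiv.Perm (Fin n)) → Prop)
    (hIS : ∀ Δ, IsInstructionSet Δ ↔
      Δ.card = n - 1 ∧ (∀ σ ∈ Δ, σ⁻¹ ⟨0, by omega⟩ ≠ ⟨0, by omega⟩) ∧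
      Set.InjOn (fun σ : Equiv.Perm (Fin n) => σ⁻¹ ⟨0, by omega⟩) ↑Δ)
    (Δgen : ℕ → List (Equiv.Perm (Fin n)) → Finset (Equiv.Perm (Fin n)))
    (hΔgen : ∀ i l, 1 ≤ i → i < N → l.length = i → IsInstructionSet (Δgen i l))
    (B : Set (Fin N → Equiv.Perm (Fin n)))
    (hB : B = {σ | σ ⟨0, by omega⟩ = 1 ∧
      (σ ⟨1, by omega⟩ ∈ Δgen 1 [σ ⟨0, by omega⟩] ∧
        σ ⟨1, by omega⟩ ⟨1, by omega⟩ = ⟨0, by omega⟩) ∧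
      ∀ i : Fin N, 2 ≤ i.val →
        σ i ∈ Δgen i.val (List.ofFn fun a : Fin i.val =>
          σ ⟨a.val, lt_trans a.isLt i.isLt⟩)})
    (A : Set (Fin N → Fin n))
    (hA : A = {u | u ⟨0, by omega⟩ = ⟨0, by omega⟩ ∧ u ⟨1, by omega⟩ = ⟨1, by omega⟩ ∧
      ∀ j : ℕ, (h : j + 1 < N) → u ⟨j, by omega⟩ ≠ u ⟨j + 1, h⟩})
    (φ : (Fin N → Equiv.Perm (Fin n)) → (Fin N → Fin n))
    (hφ : ∀ σ (j : Fin N), φ σ j =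
      ((List.ofFn fun a : Fin j.val =>
          σ ⟨j.val - a.val, lt_of_le_of_lt (Nat.sub_le _ _) j.isLt⟩).prod)⁻¹ ⟨0, by omega⟩) :
    Set.BijOn φ B A := by
  classical
  have hn0 : 0 < n := by omega
  set z0 : Fin n := ⟨0, by omega⟩ with hz0def
  -- φ expressed via Pk
  have hφ' : ∀ (σ : Fin N → Equiv.Perm (Fin n)) (σ' : ℕ → Equiv.Perm (Fin n)),
      (∀ i (h : i < N), σ' i = σ ⟨i, h⟩) →
      ∀ j (h : j < N), φ σ ⟨j, h⟩ = (Pk σ' j)⁻¹ z0 := by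
    intro σ σ' hσ' j h
    rw [hφ σ ⟨j, h⟩, ← Pk_eq_prod σ' j]
    have hl : (List.ofFn fun a : Fin ((⟨j, h⟩ : Fin N).val) =>
        σ ⟨(⟨j, h⟩ : Fin N).val - a.val,
          lt_of_le_of_lt (Nat.sub_le _ _) (⟨j, h⟩ : Fin N).isLt⟩)
        = List.ofFn fun a : Fin j => σ' (j - a.val) := by
      apply congrArg List.ofFn
      funext a
      exact (hσ' _ _).symm
    rw [hl]
  -- nonzero preimage for every instruction in a B-sequence
  have hz0ne : ∀ σ, σ ∈ B → ∀ j (hj : j < N), 1 ≤ j → (σ ⟨j, hj⟩)⁻¹ z0 ≠ z0 := by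
    intro σ hσ j hj hj1
    rw [hB] at hσ
    obtain ⟨hσ0, ⟨hσ1m, hσ1v⟩, hσ2⟩ := hσ
    rcases Nat.lt_or_ge j 2 with h2 | h2
    · have hj1' : j = 1 := by omega
      subst hj1'
      have hins := (hIS _).1 (hΔgen 1 [σ ⟨0, by omega⟩] le_rfl (by omega) rfl)
      exact hins.2.1 _ hσ1m
    · have hmem := hσ2 ⟨j, hj⟩ h2
      have hins := (hIS _).1 (hΔgen j
        (List.ofFn fun a : Fin ((⟨j, hj⟩ : Fin N).val) =>
          σ ⟨a.val, lt_trans a.isLt (⟨j, hj⟩ : Fin N).isLt⟩)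
        (by omega) hj (by simp))
      exact hins.2.1 _ hmem
  constructor
  · -- MapsTo
    intro σ hσ
    have hσB := hσ
    rw [hB] at hσB
    obtain ⟨hσ0, ⟨hσ1m, hσ1v⟩, hσ2⟩ := hσB
    set σ' : ℕ → Equiv.Perm (Fin n) := fun i => if h : i < N then σ ⟨i, h⟩ else 1 with hσ'def
    have hσ'eq : ∀ i (h : i < N), σ' i = σ ⟨i, h⟩ := fun i h => dif_pos h
    have key := hφ' σ σ' hσ'eq
    rw [hA]
    refine ⟨?_, ?_, ?_⟩
    · show φ σ ⟨0, by omega⟩ = _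
      rw [key 0 (by omega)]
      rfl
    · show φ σ ⟨1, by omega⟩ = _
      rw [key 1 (by omega), Pk_succ, Pk_zero, mul_one, hσ'eq 1 (by omega),
        Equiv.Perm.inv_eq_iff_eq]
      exact hσ1v.symm
    · intro j hj
      show φ σ ⟨j, _⟩ ≠ φ σ ⟨j + 1, hj⟩
      rw [key j (by omega), key (j+1) hj, Pk_succ, mul_inv_rev]
      intro hc
      simp only [Equiv.Perm.mul_apply] at hc
      have h2 := (Equiv.injective _) hc
      exact hz0ne σ hσ (j+1) hj (by omega)
        (by rw [← hσ'eq (j+1) hj]; exact h2.symm)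
  constructor
  · -- InjOn
    intro σ hσ τ hτ heq
    have hσB := hσ
    rw [hB] at hσB
    obtain ⟨hσ0, ⟨hσ1m, hσ1v⟩, hσ2⟩ := hσB
    have hτB := hτ
    rw [hB] at hτB
    obtain ⟨hτ0, ⟨hτ1m, hτ1v⟩, hτ2⟩ := hτB
    set σ' : ℕ → Equiv.Perm (Fin n) := fun i => if h : i < N then σ ⟨i, h⟩ else 1 with hσ'def
    set τ' : ℕ → Equiv.Perm (Fin n) := fun i => if h : i < N then τ ⟨i, h⟩ else 1 with hτ'def
    have hσ'eq : ∀ i (h : i < N), σ' i = σ ⟨i, h⟩ := fun i h => dif_pos h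
    have hτ'eq : ∀ i (h : i < N), τ' i = τ ⟨i, h⟩ := fun i h => dif_pos h
    have key : ∀ j, ∀ h : j < N, σ ⟨j, h⟩ = τ ⟨j, h⟩ := by
      intro j
      induction j using Nat.strong_induction_on with
      | _ j ih =>
        intro h
        rcases j with _ | k
        · exact hσ0.trans hτ0.symm
        · have hPk : Pk σ' k = Pk τ' k := Pk_congr k (fun i h1 h2 => by
            rw [hσ'eq i (by omega), hτ'eq i (by omega)]
            exact ih i (by omega) (by omega))
          have hphi : φ σ ⟨k+1, h⟩ = φ τ ⟨k+1, h⟩ := by rw [heq]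
          rw [hφ' σ σ' hσ'eq (k+1) h, hφ' τ τ' hτ'eq (k+1) h, Pk_succ, Pk_succ, hPk,
            mul_inv_rev, mul_inv_rev] at hphi
          simp only [Equiv.Perm.mul_apply] at hphi
          have hinv : (σ ⟨k+1, h⟩)⁻¹ z0 = (τ ⟨k+1, h⟩)⁻¹ z0 := by
            have h3 := (Equiv.injective _) hphi
            rwa [hσ'eq (k+1) h, hτ'eq (k+1) h] at h3
          rcases Nat.lt_or_ge (k+1) 2 with h2 | h2
          · have hk0 : k = 0 := by omega
            subst hk0
            have hins := (hIS _).1 (hΔgen 1 [σ ⟨0, by omega⟩] le_rfl (by omega) rfl)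
            have hτm : τ ⟨1, h⟩ ∈ Δgen 1 [σ ⟨0, by omega⟩] := by
              rw [hσ0, ← hτ0]
              exact hτ1m
            exact hins.2.2 hσ1m hτm hinv
          · have hlists : (List.ofFn fun a : Fin ((⟨k+1, h⟩ : Fin N).val) =>
                τ ⟨a.val, lt_trans a.isLt (⟨k+1, h⟩ : Fin N).isLt⟩)
                = List.ofFn fun a : Fin ((⟨k+1, h⟩ : Fin N).val) =>
                σ ⟨a.val, lt_trans a.isLt (⟨k+1, h⟩ : Fin N).isLt⟩ := by
              apply congrArg List.ofFn
              funext a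
              exact (ih a.val a.isLt _).symm
            have hσm := hσ2 ⟨k+1, h⟩ h2
            have hτm := hτ2 ⟨k+1, h⟩ h2
            rw [hlists] at hτm
            have hins := (hIS _).1 (hΔgen (k+1)
              (List.ofFn fun a : Fin ((⟨k+1, h⟩ : Fin N).val) =>
                σ ⟨a.val, lt_trans a.isLt (⟨k+1, h⟩ : Fin N).isLt⟩)
              (by omega) h (by simp))
            exact hins.2.2 hσm hτm hinv
    funext i
    have h4 := key i.val i.isLt
    simpa using h4
  · -- SurjOn
    intro u hu
    rw [hA] at hu
    obtain ⟨hu0, hu1, hustep⟩ := hu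
    set u' : ℕ → Fin n := fun j => if h : j < N then u ⟨j, h⟩ else z0 with hu'def
    have hu'eq : ∀ j (h : j < N), u' j = u ⟨j, h⟩ := fun j h => dif_pos h
    set g : ℕ → List (Equiv.Perm (Fin n)) := fun j => Nat.rec
      [1]
      (fun k prev => prev ++ [pickPerm (Δgen (k+1) prev)
        (((prev.drop 1).reverse.prod) (u' (k+1))) z0]) j with hgdef
    have hg0 : g 0 = [1] := rfl
    have hgsucc : ∀ k, g (k+1) = g k ++ [pickPerm (Δgen (k+1) (g k))
        ((((g k).drop 1).reverse.prod) (u' (k+1))) z0] := fun k => rfl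
    have hglen : ∀ j, (g j).length = j + 1 := by
      intro j
      induction j with
      | zero => rfl
      | succ k ih => rw [hgsucc, List.length_append, ih]; rfl
    set σ' : ℕ → Equiv.Perm (Fin n) := fun j => (g j).getD j 1 with hσ'def
    have hσ'0 : σ' 0 = 1 := rfl
    have hσ'succ : ∀ k, σ' (k+1) = pickPerm (Δgen (k+1) (g k))
        ((((g k).drop 1).reverse.prod) (u' (k+1))) z0 := by
      intro k
      show (g (k+1)).getD (k+1) 1 = _
      rw [hgsucc k, List.getD_append_right _ _ _ _ (le_of_eq (hglen k)), hglen]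
      simp
    have hgget : ∀ j i, i ≤ j → (g j).getD i 1 = σ' i := by
      intro j
      induction j with
      | zero =>
        intro i hi
        have : i = 0 := by omega
        subst this
        rfl
      | succ k ih =>
        intro i hi
        rcases Nat.lt_or_ge i (k+1) with hlt | hge
        · rw [hgsucc k, List.getD_append _ _ _ _ (by rw [hglen]; omega)]
          exact ih i (by omega)
        · have : i = k + 1 := by omega
          subst this
          rfl
    have hgofFn : ∀ j, g j = List.ofFn fun a : Fin (j+1) => σ' a.val := by
      intro j
      induction j with
      | zero =>
        rw [hg0]
        simp [List.ofFn_succ, hσ'0]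
      | succ k ih =>
        rw [hgsucc k, ← hσ'succ k, ih]
        conv_rhs => rw [List.ofFn_succ']
        rw [List.concat_eq_append]
        congr 1
    have hPkg : ∀ j, ((g j).drop 1).reverse.prod = Pk σ' j := by
      intro j
      induction j with
      | zero => rfl
      | succ k ih =>
        rw [hgsucc k, List.drop_append_of_le_length (by rw [hglen]; omega),
          List.reverse_append, List.reverse_singleton, List.singleton_append,
          List.prod_cons, Pk_succ, hσ'succ k, ih]
    have hinv : ∀ j, j < N → (Pk σ' j)⁻¹ z0 = u' j ∧
        (1 ≤ j → σ' j ∈ Δgen j (g (j-1)) ∧ (σ' j)⁻¹ z0 = Pk σ' (j-1) (u' j)) := by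
      intro j
      induction j with
      | zero =>
        intro _
        refine ⟨?_, fun hj => absurd hj (by omega)⟩
        rw [Pk_zero, inv_one, hu'eq 0 (by omega), hu0]
        rfl
      | succ k ih =>
        intro hk1
        obtain ⟨ihP, _⟩ := ih (by omega)
        have hxne : Pk σ' k (u' (k+1)) ≠ z0 := by
          intro hcon
          have h5 : u' (k+1) = (Pk σ' k)⁻¹ z0 := by
            rw [← hcon, Equiv.Perm.inv_def, Equiv.symm_apply_apply]
          rw [ihP] at h5
          have hne := hustep k hk1
          rw [hu'eq (k+1) hk1, hu'eq k (by omega)] at h5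
          exact hne h5.symm
        have hins := (hIS _).1 (hΔgen (k+1) (g k) (by omega) hk1 (hglen k))
        have hex : ∃ σ, σ ∈ Δgen (k+1) (g k) ∧ σ⁻¹ z0 = Pk σ' k (u' (k+1)) :=
          exists_inv_eq hins.1 hins.2.1 hins.2.2 hxne
        have hspec := pickPerm_spec hex
        have hσ'mem : σ' (k+1) ∈ Δgen (k+1) (g k) ∧
            (σ' (k+1))⁻¹ z0 = Pk σ' k (u' (k+1)) := by
          rw [hσ'succ k, hPkg k]
          exact hspec
        refine ⟨?_, fun _ => ⟨hσ'mem.1, hσ'mem.2⟩⟩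
        rw [Pk_succ, mul_inv_rev, Equiv.Perm.mul_apply, hσ'mem.2,
          Equiv.Perm.inv_def, Equiv.symm_apply_apply, hu'eq (k+1) hk1]
    refine ⟨fun i => σ' i.val, ?_, ?_⟩
    · rw [hB]
      refine ⟨hσ'0, ⟨?_, ?_⟩, ?_⟩
      · show σ' 1 ∈ Δgen 1 [σ' 0]
        rw [hσ'0]
        exact ((hinv 1 (by omega)).2 le_rfl).1
      · show σ' 1 _ = _
        have h2 := ((hinv 1 (by omega)).2 le_rfl).2
        rw [Pk_zero, Equiv.Perm.one_apply, hu'eq 1 (by omega), hu1] at h2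
        rw [← h2, Equiv.Perm.inv_def, Equiv.apply_symm_apply]
      · intro i hi2
        obtain ⟨iv, hiv⟩ := i
        rcases iv with _ | m
        · exact absurd hi2 (Nat.not_succ_le_zero 1)
        · have hm := ((hinv (m+1) hiv).2 (by omega)).1
          have hl : (List.ofFn fun a : Fin ((⟨m+1, hiv⟩ : Fin N).val) =>
              (fun i : Fin N => σ' i.val) ⟨a.val, lt_trans a.isLt (⟨m+1, hiv⟩ : Fin N).isLt⟩)
              = g m := by
            rw [hgofFn m]
          rw [hl]
          exact hm
    · funext i
      have hk := hφ' (fun i => σ' i.val) σ' (fun j h => rfl) i.val i.isLt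
      rw [(hinv i.val i.isLt).1, hu'eq i.val i.isLt] at hk
      simpa using hk
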